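/- (Theorem 1, necessity direction: tolled user equilibrium is socially optimal.) Assume additionally that the social cost f(λ) = Σ_a (λ_a · s_a(λ_a) + b_a · λ_a) is convex on K. Suppose λ* ∈ K minimizes the tolled user-equilibrium potential g(λ) = Σ_a (∫_0^{λ_a} s_a(x) dx + (b_a + ϑ_a) · λ_a) over K, where the tolls are ϑ_a = λ*_a · (deriv s_a)(λ*_a). Then λ* minimizes f over K. -/

import Mathlib

/-- Theorem 1 (necessity): a tolled user equilibrium is socially optimal.
Assume the social cost `f(λ) = ∑ a, (λ_a * s_a(λ_a) + b_a * λ_a)` is convex on the convex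
feasible set `K`. If `lam ∈ K` minimizes the tolled user-equilibrium (Beckmann) potential
`g(λ) = ∑ a, (∫ x in 0..λ_a, s_a x + (b_a + ϑ_a) * λ_a)` over `K`, with tolls
`ϑ_a = lam_a * (deriv (s a)) (lam a)`, then `lam` minimizes `f` over `K`. -/
theorem marginal_pricing_necessity {n : ℕ} (K : Set (Fin n → ℝ)) (hK : Convex ℝ K)
    (s : Fin n → ℝ → ℝ) (b : Fin n → ℝ)
    (hcont : ∀ a, Continuous (s a))
    (hdiff : ∀ a, Differentiable ℝ (s a))
    (hderiv_nonneg : ∀ a x, 0 ≤ deriv (s a) x)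
    (hconv : ConvexOn ℝ K (fun lam : Fin n → ℝ =>
      ∑ a, (lam a * s a (lam a) + b a * lam a)))
    (lam : Fin n → ℝ) (hlam : lam ∈ K)
    (hmin : ∀ μ ∈ K,
      (∑ a, ((∫ x in (0:ℝ)..(lam a), s a x)
          + (b a + lam a * deriv (s a) (lam a)) * lam a))
      ≤ ∑ a, ((∫ x in (0:ℝ)..(μ a), s a x)
          + (b a + lam a * deriv (s a) (lam a)) * μ a)) :
    ∀ μ ∈ K,
      (∑ a, (lam a * s a (lam a) + b a * lam a)) ≤ ∑ a, (μ a * s a (μ a) + b a * μ a) := by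
  intro μ hμ
  set d : Fin n → ℝ := fun a => μ a - lam a with hd
  set θ : Fin n → ℝ := fun a => lam a * deriv (s a) (lam a) with hθ
  set ν : ℝ → (Fin n → ℝ) := fun t a => lam a + t * d a with hν
  have hνconv : ∀ t : ℝ, (1 - t) • lam + t • μ = ν t := by
    intro t; funext a
    simp only [Pi.add_apply, Pi.smul_apply, smul_eq_mul, hν, hd]
    ring
  have hνmem : ∀ t ∈ Set.Icc (0:ℝ) 1, ν t ∈ K := by
    intro t ht
    have := hK hlam hμ (a := 1 - t) (b := t) (by linarith [ht.2]) ht.1 (by ring)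
    rwa [hνconv t] at this
  set F : ℝ → ℝ := fun t => ∑ a, ((ν t a) * s a (ν t a) + b a * (ν t a)) with hF
  set G : ℝ → ℝ := fun t => ∑ a, ((∫ x in (0:ℝ)..(ν t a), s a x) + (b a + θ a) * (ν t a))
    with hG
  set D : ℝ := ∑ a, (s a (lam a) + b a + θ a) * d a with hD
  have hν0 : ∀ a, ν 0 a = lam a := by intro a; simp [hν]
  -- derivative of the affine path
  have hlin : ∀ a, HasDerivAt (fun t : ℝ => lam a + t * d a) (d a) 0 := by
    intro a
    simpa using ((hasDerivAt_mul_const (d a)).const_add (lam a) : _)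
  -- derivative of G at 0
  have hGD : HasDerivAt G D 0 := by
    have h := HasDerivAt.sum (u := Finset.univ)
      (fun a _ => by
        have hΦ : HasDerivAt (fun u : ℝ => ∫ x in (0:ℝ)..u, s a x) (s a (lam a)) (lam a) :=
          intervalIntegral.integral_hasDerivAt_right
            ((hcont a).intervalIntegrable _ _)
            ((hcont a).stronglyMeasurableAtFilter _ _) (hcont a).continuousAt
        have h1 : HasDerivAt (fun t : ℝ => ∫ x in (0:ℝ)..(lam a + t * d a), s a x)
            (s a (lam a) * d a) 0 := by
          have he : lam a = lam a + 0 * d a := by ring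
          rw [he] at hΦ
          have := hΦ.comp 0 (hlin a)
          simpa [Function.comp_def, ← he] using this
        have h2 : HasDerivAt (fun t : ℝ => (b a + θ a) * (lam a + t * d a))
            ((b a + θ a) * d a) 0 := (hlin a).const_mul _
        exact h1.add h2)
    convert h using 1
    · rfl
    · rfl
    · ext t; rw [Finset.sum_apply]; rfl
    rw [hD]
    congr 1
    funext a
    ring
  -- derivative of F at 0
  have hFD : HasDerivAt F D 0 := by
    have h := HasDerivAt.sum (u := Finset.univ)
      (fun a _ => by
        have hs : HasDerivAt (fun t : ℝ => s a (lam a + t * d a))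
            (deriv (s a) (lam a) * d a) 0 := by
          have hsa := (hdiff a (lam a)).hasDerivAt
          have he : lam a = lam a + 0 * d a := by ring
          rw [he] at hsa
          have := hsa.comp 0 (hlin a)
          simpa [Function.comp_def, ← he] using this
        have h1 : HasDerivAt (fun t : ℝ => (lam a + t * d a) * s a (lam a + t * d a))
            (d a * s a (lam a + 0 * d a) + (lam a + 0 * d a) * (deriv (s a) (lam a) * d a))
            0 := (hlin a).mul hs
        have h2 : HasDerivAt (fun t : ℝ => b a * (lam a + t * d a)) (b a * d a) 0 :=
          (hlin a).const_mul _
        exact h1.add h2)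
    convert h using 1
    · rfl
    · rfl
    · ext t; rw [Finset.sum_apply]; rfl
    rw [hD]
    congr 1
    funext a
    simp only [zero_mul, add_zero, hθ]
    ring
  have hmem : Set.Ioo (0:ℝ) 1 ∈ nhdsWithin (0:ℝ) (Set.Ioi 0) :=
    Ioo_mem_nhdsGT_of_mem (by norm_num : (0:ℝ) ∈ Set.Ico 0 1)
  have hmono : nhdsWithin (0:ℝ) (Set.Ioi 0) ≤ nhdsWithin (0:ℝ) {(0:ℝ)}ᶜ :=
    nhdsWithin_mono 0 (fun x hx => ne_of_gt hx)
  -- D ≥ 0 from minimality of G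
  have hD0 : 0 ≤ D := by
    have hGs := (hasDerivAt_iff_tendsto_slope.mp hGD).mono_left hmono
    refine ge_of_tendsto hGs ?_
    filter_upwards [hmem, self_mem_nhdsWithin] with t ht ht0
    have htK : ν t ∈ K := hνmem t ⟨le_of_lt ht.1, le_of_lt ht.2⟩
    have hle : G 0 ≤ G t := by
      have := hmin (ν t) htK
      simpa [hG, hν0] using this
    rw [slope_def_field]
    have : (0:ℝ) < t := ht0
    rw [sub_zero]
    exact div_nonneg (by linarith) this.le
  -- D ≤ f μ - f lam from convexity of f
  have hDle : D ≤ (∑ a, (μ a * s a (μ a) + b a * μ a)) - F 0 := by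
    have hFs := (hasDerivAt_iff_tendsto_slope.mp hFD).mono_left hmono
    refine le_of_tendsto hFs ?_
    filter_upwards [hmem, self_mem_nhdsWithin] with t ht ht0
    have ht1 : (0:ℝ) < t := ht0
    have hconv2 := hconv.2
    have hcv := hconv2 hlam hμ (a := 1 - t) (b := t) (by linarith [ht.2]) ht.1.le (by ring)
    rw [hνconv t] at hcv
    have hFt : F t ≤ (1 - t) * F 0 + t * (∑ a, (μ a * s a (μ a) + b a * μ a)) := by
      simpa [hF, hν0, smul_eq_mul] using hcv
    rw [slope_def_field, sub_zero, div_le_iff₀ ht1]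
    nlinarith [hFt]
  have hF0 : F 0 = ∑ a, (lam a * s a (lam a) + b a * lam a) := by
    simp [hF, hν0]
  linarith [hD0, hDle, hF0.symm.le, hF0.le]
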